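/- For 1 ≤ p ≤ √r and q = √(r − p²), the dual cone of S_p = {x ∈ R^r : e^T x ≥ p‖x‖} is S_q, i.e. {y : x^T y ≥ 0 for all x ∈ S_p} = {y : e^T y ≥ q‖y‖}. -/

import Mathlib

open scoped BigOperators RealInnerProductSpace

private lemma aux_sq_le {a b : ℝ} (ha : 0 ≤ a) (hb : 0 ≤ b) (h : a ^ 2 ≤ b ^ 2) :
    a ≤ b := by nlinarith [h, ha, hb]

set_option maxHeartbeats 2000000 in
/-- For `1 ≤ p ≤ √r` and `q = √(r - p²)`, the dual cone of
`S_p = {x : e^T x ≥ p‖x‖}` is `S_q`. -/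
theorem stmt5 (r : ℕ) (hr : 1 ≤ r) (p : ℝ) (hp1 : 1 ≤ p) (hpr : p ≤ Real.sqrt r) :
    {y : EuclideanSpace ℝ (Fin r) |
        ∀ x : EuclideanSpace ℝ (Fin r), p * ‖x‖ ≤ ∑ i, x i → 0 ≤ ⟪x, y⟫}
      = {y : EuclideanSpace ℝ (Fin r) |
          Real.sqrt ((r : ℝ) - p ^ 2) * ‖y‖ ≤ ∑ i, y i} := by
  have hp0 : (0:ℝ) < p := lt_of_lt_of_le one_pos hp1
  have hr0 : (0:ℝ) < r := by exact_mod_cast hr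
  have hsr : Real.sqrt r ^ 2 = (r:ℝ) := Real.sq_sqrt hr0.le
  have hp2r : p ^ 2 ≤ (r:ℝ) := by
    have h := mul_le_mul hpr hpr hp0.le (Real.sqrt_nonneg (r:ℝ))
    nlinarith [h, hsr]
  set q := Real.sqrt ((r:ℝ) - p ^ 2) with hqdef
  have hq0 : 0 ≤ q := Real.sqrt_nonneg _
  have hq2 : q ^ 2 = (r:ℝ) - p ^ 2 := Real.sq_sqrt (by linarith)
  set e : EuclideanSpace ℝ (Fin r) := WithLp.toLp 2 (fun _ => (1:ℝ)) with he
  have hsum : ∀ z : EuclideanSpace ℝ (Fin r), ∑ i, z i = ⟪e, z⟫ := by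
    intro z; simp [PiLp.inner_apply, he]
  have hee : ⟪e, e⟫ = (r:ℝ) := by rw [he, PiLp.inner_apply]; simp
  have hne : ‖e‖ = Real.sqrt r := by
    have h : ‖e‖ ^ 2 = (r:ℝ) := by rw [← real_inner_self_eq_norm_sq, hee]
    rw [← h, Real.sqrt_sq (norm_nonneg e)]
  clear_value q e
  ext y
  simp only [Set.mem_setOf_eq]
  constructor
  · -- dual cone ⊆ S_q
    intro hy
    rw [hsum]
    set t := ⟪e, y⟫ with htdef
    have ht0 : 0 ≤ t := by
      apply hy e
      rw [hsum, hee, hne]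
      have h := mul_le_mul_of_nonneg_right hpr (Real.sqrt_nonneg (r:ℝ))
      nlinarith [h, hsr]
    rcases eq_or_lt_of_le hq0 with hq | hqpos
    · rw [← hq, zero_mul]; exact ht0
    set v : EuclideanSpace ℝ (Fin r) := (r:ℝ) • y - t • e with hv
    have hev : ⟪e, v⟫ = 0 := by
      simp only [hv, inner_sub_right, real_inner_smul_right, hee, ← htdef]
      ring
    have hvy : ⟪v, y⟫ = (r:ℝ) * ‖y‖ ^ 2 - t ^ 2 := by
      simp only [hv, inner_sub_left, real_inner_smul_left,
        real_inner_self_eq_norm_sq, ← htdef]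
      ring
    have hvv : ‖v‖ ^ 2 = (r:ℝ) ^ 2 * ‖y‖ ^ 2 - (r:ℝ) * t ^ 2 := by
      rw [← real_inner_self_eq_norm_sq]
      simp only [hv, inner_sub_left, inner_sub_right, real_inner_smul_left,
        real_inner_smul_right]
      simp only [real_inner_comm e y, hee, ← htdef, real_inner_self_eq_norm_sq]
      ring
    clear_value t v
    by_cases hvz : ‖v‖ = 0
    · rw [hvz] at hvv
      have hyy : (r:ℝ) ^ 2 * ‖y‖ ^ 2 = (r:ℝ) * t ^ 2 := by nlinarith [hvv]
      have e3 : q ^ 2 * ((r:ℝ) ^ 2 * ‖y‖ ^ 2) = q ^ 2 * ((r:ℝ) * t ^ 2) := by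
        linear_combination q ^ 2 * hyy
      have e4 : q ^ 2 * ((r:ℝ) * t ^ 2) = ((r:ℝ) - p ^ 2) * ((r:ℝ) * t ^ 2) := by
        rw [hq2]
      have h10 : (q * ‖y‖) ^ 2 * (r:ℝ) ^ 2 ≤ t ^ 2 * (r:ℝ) ^ 2 := by
        have hnn : 0 ≤ p ^ 2 * ((r:ℝ) * t ^ 2) :=
          mul_nonneg (sq_nonneg p) (mul_nonneg hr0.le (sq_nonneg t))
        linarith [e3, e4, hnn]
      have h11 : (q * ‖y‖) ^ 2 ≤ t ^ 2 :=
        le_of_mul_le_mul_right h10 (by positivity)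
      exact aux_sq_le (mul_nonneg hq0 (norm_nonneg y)) ht0 h11
    · have hvpos : 0 < ‖v‖ := lt_of_le_of_ne (norm_nonneg v) (Ne.symm hvz)
      set sr := Real.sqrt (r:ℝ) with hsrdef
      have hsrpos : 0 < sr := Real.sqrt_pos.mpr hr0
      have hsr2 : sr ^ 2 = (r:ℝ) := hsr
      set α : ℝ := p * ‖v‖ / (q * sr) with hα
      have hα0 : 0 ≤ α := by positivity
      have hαsq : α ^ 2 * ((r:ℝ) * q ^ 2) = p ^ 2 * ‖v‖ ^ 2 := by
        rw [hα, div_pow]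
        rw [div_mul_eq_mul_div, div_eq_iff (by positivity)]
        linear_combination (-(p ^ 2 * ‖v‖ ^ 2 * q ^ 2)) * hsr2
      clear_value α
      set x : EuclideanSpace ℝ (Fin r) := α • e - v with hx
      have hex : ⟪e, x⟫ = α * r := by
        simp only [hx, inner_sub_right, real_inner_smul_right, hee, hev, sub_zero]
      have hxn : ‖x‖ ^ 2 = α ^ 2 * r + ‖v‖ ^ 2 := by
        rw [← real_inner_self_eq_norm_sq]
        simp only [hx, inner_sub_left, inner_sub_right, real_inner_smul_left,
          real_inner_smul_right]
        simp only [real_inner_comm e v, hee, hev, real_inner_self_eq_norm_sq]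
        ring
      have hxy' : ⟪x, y⟫ * r = α * t * r - ‖v‖ ^ 2 := by
        have h : ⟪x, y⟫ = α * ⟪e, y⟫ - ⟪v, y⟫ := by
          simp only [hx, inner_sub_left, real_inner_smul_left]
        rw [h, ← htdef, hvy, hvv]
        ring
      have hmem : p * ‖x‖ ≤ ∑ i, x i := by
        rw [hsum, hex]
        have hsq : (p * ‖x‖) ^ 2 = (α * r) ^ 2 := by
          rw [mul_pow, hxn, mul_pow]
          linear_combination (-1 : ℝ) * hαsq + (α ^ 2 * (r:ℝ)) * hq2
        exact aux_sq_le (mul_nonneg hp0.le (norm_nonneg x))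
          (mul_nonneg hα0 hr0.le) hsq.le
      have hxy : 0 ≤ ⟪x, y⟫ := hy x hmem
      clear_value x
      have hαt : ‖v‖ ^ 2 ≤ α * t * r := by
        have h := mul_nonneg hxy hr0.le
        linarith [hxy', h]
      have h5 : ‖v‖ ^ 2 * ‖v‖ ^ 2 ≤ (α * t * r) * (α * t * r) :=
        mul_le_mul hαt hαt (sq_nonneg _) (mul_nonneg (mul_nonneg hα0 ht0) hr0.le)
      have h6 : q ^ 2 * ‖v‖ ^ 2 ≤ p ^ 2 * t ^ 2 * r := by
        have h7 : q ^ 2 * r * (‖v‖ ^ 2 * ‖v‖ ^ 2) ≤ q ^ 2 * r * ((α * t * r) * (α * t * r)) :=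
          mul_le_mul_of_nonneg_left h5 (by positivity)
        have h8 : q ^ 2 * r * ((α * t * r) * (α * t * r)) = p ^ 2 * ‖v‖ ^ 2 * t ^ 2 * r ^ 2 := by
          linear_combination (t ^ 2 * (r:ℝ) ^ 2) * hαsq
        have h7' : q ^ 2 * ‖v‖ ^ 2 * ((r:ℝ) * ‖v‖ ^ 2) ≤ p ^ 2 * t ^ 2 * r * ((r:ℝ) * ‖v‖ ^ 2) := by
          linarith [h7, h8]
        exact le_of_mul_le_mul_right h7' (by positivity)
      have e1 : q ^ 2 * ((r:ℝ) ^ 2 * ‖y‖ ^ 2) = q ^ 2 * ‖v‖ ^ 2 + q ^ 2 * ((r:ℝ) * t ^ 2) := by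
        linear_combination (-(q ^ 2)) * hvv
      have e2 : q ^ 2 * ((r:ℝ) * t ^ 2) + p ^ 2 * t ^ 2 * r = (r:ℝ) ^ 2 * t ^ 2 := by
        linear_combination ((r:ℝ) * t ^ 2) * hq2
      have h9 : (q * ‖y‖) ^ 2 * (r:ℝ) ^ 2 ≤ t ^ 2 * (r:ℝ) ^ 2 := by
        linarith [e1, e2, h6]
      have h11 : (q * ‖y‖) ^ 2 ≤ t ^ 2 :=
        le_of_mul_le_mul_right h9 (by positivity)
      exact aux_sq_le (mul_nonneg hq0 (norm_nonneg y)) ht0 h11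
  · -- S_q ⊆ dual cone
    intro hy x hx
    rw [hsum] at hx hy
    set s := ⟪e, x⟫ with hsdef
    set t := ⟪e, y⟫ with htdef
    have hs0 : 0 ≤ s := le_trans (by positivity) hx
    have ht0 : 0 ≤ t := le_trans (by positivity) hy
    set u : EuclideanSpace ℝ (Fin r) := (r:ℝ) • x - s • e with hu
    set v : EuclideanSpace ℝ (Fin r) := (r:ℝ) • y - t • e with hv
    have huv : ⟪u, v⟫ = (r:ℝ) ^ 2 * ⟪x, y⟫ - (r:ℝ) * s * t := by
      simp only [hu, hv, inner_sub_left, inner_sub_right, real_inner_smul_left,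
        real_inner_smul_right]
      simp only [real_inner_comm e y, real_inner_comm e x, hee, ← hsdef, ← htdef]
      ring
    have hun : ‖u‖ ^ 2 = (r:ℝ) ^ 2 * ‖x‖ ^ 2 - (r:ℝ) * s ^ 2 := by
      rw [← real_inner_self_eq_norm_sq]
      simp only [hu, inner_sub_left, inner_sub_right, real_inner_smul_left,
        real_inner_smul_right]
      simp only [real_inner_comm e x, hee, ← hsdef, real_inner_self_eq_norm_sq]
      ring
    have hvn : ‖v‖ ^ 2 = (r:ℝ) ^ 2 * ‖y‖ ^ 2 - (r:ℝ) * t ^ 2 := by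
      rw [← real_inner_self_eq_norm_sq]
      simp only [hv, inner_sub_left, inner_sub_right, real_inner_smul_left,
        real_inner_smul_right]
      simp only [real_inner_comm e y, hee, ← htdef, real_inner_self_eq_norm_sq]
      ring
    clear_value s t u v
    have hub : ‖u‖ ^ 2 ≤ (r:ℝ) * q ^ 2 * ‖x‖ ^ 2 := by
      have h1 : p * ‖x‖ * (p * ‖x‖) ≤ s * s :=
        mul_le_mul hx hx (by positivity) hs0
      have h1' : p ^ 2 * ‖x‖ ^ 2 ≤ s ^ 2 := by linarith [h1]
      have h2 : (r:ℝ) * (p ^ 2 * ‖x‖ ^ 2) ≤ (r:ℝ) * s ^ 2 :=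
        mul_le_mul_of_nonneg_left h1' hr0.le
      have hqe : (r:ℝ) * q ^ 2 * ‖x‖ ^ 2 = (r:ℝ) ^ 2 * ‖x‖ ^ 2 - (r:ℝ) * (p ^ 2 * ‖x‖ ^ 2) := by
        linear_combination ((r:ℝ) * ‖x‖ ^ 2) * hq2
      linarith [hun, h2, hqe]
    have hvb : ‖v‖ ^ 2 ≤ (r:ℝ) * p ^ 2 * ‖y‖ ^ 2 := by
      have h1 : q * ‖y‖ * (q * ‖y‖) ≤ t * t :=
        mul_le_mul hy hy (by positivity) ht0
      have h1' : q ^ 2 * ‖y‖ ^ 2 ≤ t ^ 2 := by linarith [h1]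
      have h2 : (r:ℝ) * (q ^ 2 * ‖y‖ ^ 2) ≤ (r:ℝ) * t ^ 2 :=
        mul_le_mul_of_nonneg_left h1' hr0.le
      have hqe : (r:ℝ) * p ^ 2 * ‖y‖ ^ 2 = (r:ℝ) ^ 2 * ‖y‖ ^ 2 - (r:ℝ) * (q ^ 2 * ‖y‖ ^ 2) := by
        linear_combination ((r:ℝ) * ‖y‖ ^ 2) * hq2
      linarith [hvn, h2, hqe]
    have hcs : -(‖u‖ * ‖v‖) ≤ ⟪u, v⟫ :=
      neg_le_of_neg_le (by linarith [abs_le.mp (abs_real_inner_le_norm u v) |>.1])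
    have hprod : ‖u‖ * ‖v‖ ≤ (r:ℝ) * p * q * ‖x‖ * ‖y‖ := by
      have h1 : (‖u‖ * ‖v‖) ^ 2 ≤ ((r:ℝ) * p * q * ‖x‖ * ‖y‖) ^ 2 := by
        have h := mul_le_mul hub hvb (sq_nonneg _) (by positivity)
        linarith [h]
      exact aux_sq_le (mul_nonneg (norm_nonneg u) (norm_nonneg v)) (by positivity) h1
    have hst : p * q * ‖x‖ * ‖y‖ ≤ s * t := by
      calc p * q * ‖x‖ * ‖y‖ = (p * ‖x‖) * (q * ‖y‖) := by ring
        _ ≤ s * t := mul_le_mul hx hy (by positivity) hs0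
    have e5 : (r:ℝ) * (p * q * ‖x‖ * ‖y‖) ≤ (r:ℝ) * (s * t) :=
      mul_le_mul_of_nonneg_left hst hr0.le
    have hD2 : (r:ℝ) ^ 2 * 0 ≤ (r:ℝ) ^ 2 * ⟪x, y⟫ := by linarith [huv, hcs, hprod, e5]
    exact le_of_mul_le_mul_left hD2 (by positivity)
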